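/- Let k ≥ 2, γ ∈ ℝ with -k ≤ γ ≤ 0, b ∈ (1,2), C_ξ ≥ 1, and r, d₁, d₂ ≥ 0 with d₁ ≤ br, d₂ ≤ bC_ξ r. Then there exists a constant c = c(b, C_ξ, k, γ) > 0 such that ∫₀^{d₁+r} ∫₀^{d₂+r} s^{k-2}(s+y)^γ y² ds dy ≤ c (d₁+r)² (d₂+r)^γ r^k. -/

import Mathlib

open MeasureTheory

set_option maxHeartbeats 1000000 in
/-- Doubling estimate (nonpositive exponent case): for `-k ≤ γ ≤ 0`, `d₁ ≤ br`,
`d₂ ≤ bC_ξ r`, `∫₀^{d₁+r} ∫₀^{d₂+r} s^{k-2}(s+y)^γ y² ds dy ≤ c (d₁+r)² (d₂+r)^γ r^k`. -/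
theorem stmt7 (k : ℕ) (hk : 2 ≤ k) (γ : ℝ) (hγl : -(k : ℝ) ≤ γ) (hγu : γ ≤ 0)
    (b Cξ : ℝ) (hb1 : 1 < b) (hb2 : b < 2) (hCξ : 1 ≤ Cξ) :
    ∃ c : ℝ, 0 < c ∧ ∀ r d₁ d₂ : ℝ, 0 ≤ r → 0 ≤ d₁ → 0 ≤ d₂ →
      d₁ ≤ b * r → d₂ ≤ b * Cξ * r →
      (∫ y in Set.Ioc (0 : ℝ) (d₁ + r), ∫ s in Set.Ioc (0 : ℝ) (d₂ + r),
        s ^ ((k : ℝ) - 2) * (s + y) ^ γ * y ^ 2) ≤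
      c * (d₁ + r) ^ 2 * (d₂ + r) ^ γ * r ^ k := by
  have hb0 : (0:ℝ) < b := lt_trans one_pos hb1
  have hCξ0 : (0:ℝ) < Cξ := lt_of_lt_of_le one_pos hCξ
  have h1 : (0:ℝ) < 1 + b * Cξ := by nlinarith
  have h2 : (0:ℝ) < 2 + b + b * Cξ := by nlinarith
  have hc0 : (0:ℝ) < (1 + b * Cξ) ^ (1 - γ) * (2 + b + b * Cξ) ^ (γ + k) := by
    exact mul_pos (Real.rpow_pos_of_pos h1 _) (Real.rpow_pos_of_pos h2 _)
  refine ⟨(1 + b * Cξ) ^ (1 - γ) * (2 + b + b * Cξ) ^ (γ + k), hc0,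
    fun r d₁ d₂ hr hd₁ hd₂ hdb₁ hdb₂ => ?_⟩
  rcases eq_or_lt_of_le hr with hr0 | hr0
  · have hd1 : d₁ = 0 := le_antisymm (by nlinarith) hd₁
    have hd2 : d₂ = 0 := le_antisymm (by nlinarith) hd₂
    subst hd1 hd2
    rw [← hr0]
    simp
  -- r > 0
  set A := d₁ + r with hA
  set B := d₂ + r with hB
  set S := 2 * r + d₁ + d₂ with hS
  clear_value A B S
  have hA0 : 0 < A := by rw [hA]; linarith
  have hB0 : 0 < B := by rw [hB]; linarith
  have hγk : 0 ≤ γ + (k:ℝ) := by linarith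
  have hS0 : 0 < S := by rw [hS]; linarith
  have hk2 : (2:ℝ) ≤ (k:ℝ) := by exact_mod_cast hk
  -- pointwise bound
  have key : ∀ y ∈ Set.Ioc (0:ℝ) A, ∀ s ∈ Set.Ioc (0:ℝ) B,
      s ^ ((k : ℝ) - 2) * (s + y) ^ γ * y ^ 2 ≤ S ^ (γ + (k:ℝ)) := by
    intro y hy s hs
    have hs0 : 0 < s := hs.1
    have hy0 : 0 < y := hy.1
    have hsy : 0 < s + y := by linarith
    have h1' : s ^ ((k : ℝ) - 2) ≤ (s + y) ^ ((k : ℝ) - 2) :=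
      Real.rpow_le_rpow hs0.le (by linarith) (by linarith)
    have h2' : y ^ 2 ≤ (s + y) ^ 2 := by nlinarith
    have hpg : (0:ℝ) ≤ (s + y) ^ γ := Real.rpow_nonneg hsy.le γ
    have hpk : (0:ℝ) ≤ (s + y) ^ ((k:ℝ) - 2) := Real.rpow_nonneg hsy.le _
    have step : s ^ ((k : ℝ) - 2) * (s + y) ^ γ * y ^ 2
        ≤ (s + y) ^ ((k : ℝ) - 2) * (s + y) ^ γ * (s + y) ^ 2 := by
      have e1 : s ^ ((k : ℝ) - 2) * (s + y) ^ γ ≤ (s + y) ^ ((k : ℝ) - 2) * (s + y) ^ γ :=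
        mul_le_mul_of_nonneg_right h1' hpg
      calc s ^ ((k : ℝ) - 2) * (s + y) ^ γ * y ^ 2
          ≤ (s + y) ^ ((k : ℝ) - 2) * (s + y) ^ γ * y ^ 2 :=
            mul_le_mul_of_nonneg_right e1 (sq_nonneg y)
        _ ≤ (s + y) ^ ((k : ℝ) - 2) * (s + y) ^ γ * (s + y) ^ 2 :=
            mul_le_mul_of_nonneg_left h2' (mul_nonneg hpk hpg)
    calc s ^ ((k : ℝ) - 2) * (s + y) ^ γ * y ^ 2
        ≤ (s + y) ^ ((k : ℝ) - 2) * (s + y) ^ γ * (s + y) ^ 2 := step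
      _ = (s + y) ^ (γ + (k:ℝ)) := by
          rw [← Real.rpow_natCast (s + y) 2, ← Real.rpow_add hsy, ← Real.rpow_add hsy]
          congr 1
          push_cast
          ring
      _ ≤ S ^ (γ + (k:ℝ)) := by
          apply Real.rpow_le_rpow hsy.le _ hγk
          have := hs.2; have := hy.2
          rw [hS]; rw [hA] at *; rw [hB] at *
          linarith
  have hvolB : (volume (Set.Ioc (0:ℝ) B)).toReal = B := by
    rw [Real.volume_Ioc, sub_zero, ENNReal.toReal_ofReal hB0.le]
  have hvolA : (volume (Set.Ioc (0:ℝ) A)).toReal = A := by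
    rw [Real.volume_Ioc, sub_zero, ENNReal.toReal_ofReal hA0.le]
  have inner : ∀ y ∈ Set.Ioc (0:ℝ) A,
      ‖∫ s in Set.Ioc (0:ℝ) B, s ^ ((k : ℝ) - 2) * (s + y) ^ γ * y ^ 2‖
        ≤ S ^ (γ + (k:ℝ)) * B := by
    intro y hy
    have := norm_setIntegral_le_of_norm_le_const (μ := volume)
      (f := fun s => s ^ ((k : ℝ) - 2) * (s + y) ^ γ * y ^ 2)
      (C := S ^ (γ + (k:ℝ))) (s := Set.Ioc (0:ℝ) B)
      (by rw [Real.volume_Ioc]; exact ENNReal.ofReal_lt_top)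
      (fun s hs => by
        have hnn : (0:ℝ) ≤ s ^ ((k : ℝ) - 2) * (s + y) ^ γ * y ^ 2 :=
          mul_nonneg (mul_nonneg (Real.rpow_nonneg hs.1.le _)
            (Real.rpow_nonneg (by linarith [hs.1, hy.1]) _)) (sq_nonneg y)
        rw [Real.norm_eq_abs, abs_of_nonneg hnn]
        exact key y hy s hs)
    rwa [measureReal_def, hvolB] at this
  have outer : ‖∫ y in Set.Ioc (0:ℝ) A, ∫ s in Set.Ioc (0:ℝ) B,
      s ^ ((k : ℝ) - 2) * (s + y) ^ γ * y ^ 2‖ ≤ S ^ (γ + (k:ℝ)) * B * A := by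
    have := norm_setIntegral_le_of_norm_le_const (μ := volume)
      (f := fun y => ∫ s in Set.Ioc (0:ℝ) B, s ^ ((k : ℝ) - 2) * (s + y) ^ γ * y ^ 2)
      (C := S ^ (γ + (k:ℝ)) * B) (s := Set.Ioc (0:ℝ) A)
      (by rw [Real.volume_Ioc]; exact ENNReal.ofReal_lt_top) inner
    rwa [measureReal_def, hvolA] at this
  -- final algebra
  set c0 := (1 + b * Cξ) ^ (1 - γ) * (2 + b + b * Cξ) ^ (γ + (k:ℝ)) with hc
  clear_value c0
  have hBγ : (0:ℝ) ≤ B ^ γ := Real.rpow_nonneg hB0.le γ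
  have final : S ^ (γ + (k:ℝ)) * B * A ≤ c0 * A ^ 2 * B ^ γ * r ^ k := by
    have hB1 : B ^ ((1:ℝ) - γ) ≤ ((1 + b * Cξ) * r) ^ ((1:ℝ) - γ) :=
      Real.rpow_le_rpow hB0.le (by rw [hB]; nlinarith) (by linarith)
    have hS1 : S ^ (γ + (k:ℝ)) ≤ ((2 + b + b * Cξ) * r) ^ (γ + (k:ℝ)) :=
      Real.rpow_le_rpow hS0.le (by rw [hS]; nlinarith) hγk
    have hBsplit : B ^ ((1:ℝ) - γ) * B ^ γ = B := by
      rw [← Real.rpow_add hB0]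
      norm_num
    have hrA : r ≤ A := by rw [hA]; linarith
    have hprod : B ^ ((1:ℝ) - γ) * S ^ (γ + (k:ℝ)) ≤ c0 * (r * r ^ k) := by
      have e := mul_le_mul hB1 hS1 (Real.rpow_nonneg hS0.le _)
        (Real.rpow_nonneg (by positivity) _)
      have e2 : ((1 + b * Cξ) * r) ^ ((1:ℝ) - γ) * ((2 + b + b * Cξ) * r) ^ (γ + (k:ℝ))
          = c0 * (r ^ ((1:ℝ) - γ) * r ^ (γ + (k:ℝ))) := by
        rw [Real.mul_rpow h1.le hr, Real.mul_rpow h2.le hr, hc]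
        ring
      have e3 : r ^ ((1:ℝ) - γ) * r ^ (γ + (k:ℝ)) = r * r ^ k := by
        rw [← Real.rpow_add hr0]
        have : (1:ℝ) - γ + (γ + (k:ℝ)) = 1 + (k:ℝ) := by ring
        rw [this, Real.rpow_add hr0, Real.rpow_one, Real.rpow_natCast]
      rw [e2, e3] at e
      exact e
    have h3 : S ^ (γ + (k:ℝ)) * B * A = (B ^ ((1:ℝ) - γ) * S ^ (γ + (k:ℝ))) * B ^ γ * A := by
      conv_lhs => rw [← hBsplit]
      ring
    have hmid : (B ^ ((1:ℝ) - γ) * S ^ (γ + (k:ℝ))) * B ^ γ * A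
        ≤ (c0 * (r * r ^ k)) * B ^ γ * A :=
      mul_le_mul_of_nonneg_right (mul_le_mul_of_nonneg_right hprod hBγ) hA0.le
    have hlast : (c0 * (r * r ^ k)) * B ^ γ * A ≤ c0 * A ^ 2 * B ^ γ * r ^ k := by
      have hra : r * A ≤ A ^ 2 := by nlinarith
      have hfac : (0:ℝ) ≤ c0 * B ^ γ * r ^ k :=
        mul_nonneg (mul_nonneg hc0.le hBγ) (pow_nonneg hr0.le k)
      have e4 : (c0 * (r * r ^ k)) * B ^ γ * A = (c0 * B ^ γ * r ^ k) * (r * A) := by ring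
      have e5 : c0 * A ^ 2 * B ^ γ * r ^ k = (c0 * B ^ γ * r ^ k) * A ^ 2 := by ring
      rw [e4, e5]
      exact mul_le_mul_of_nonneg_left hra hfac
    rw [h3]; exact le_trans hmid hlast
  calc (∫ y in Set.Ioc (0 : ℝ) A, ∫ s in Set.Ioc (0 : ℝ) B,
        s ^ ((k : ℝ) - 2) * (s + y) ^ γ * y ^ 2)
      ≤ ‖∫ y in Set.Ioc (0 : ℝ) A, ∫ s in Set.Ioc (0 : ℝ) B,
        s ^ ((k : ℝ) - 2) * (s + y) ^ γ * y ^ 2‖ := le_abs_self _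
    _ ≤ S ^ (γ + (k:ℝ)) * B * A := outer
    _ ≤ c0 * A ^ 2 * B ^ γ * r ^ k := final
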